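/- Let (Δ')⁺ be a positive system for Δ', i.e. (Δ')⁺ ∪ (−(Δ')⁺) = Δ', (Δ')⁺ ∩ (−(Δ')⁺) = ∅, and any sum of elements of (Δ')⁺ that lies in Δ' lies in (Δ')⁺. Define Δ⁺ := (Δ')⁺ ∪ {α ∈ Δ̂ : Re (α,λ) > 0} ∪ {α ∈ Δ̂ : (α,λ) ∈ i·ℝ_{>0}}. Then Δ⁺ is a positive system for Δ, and it is invariant: for every α ∈ Δ⁺ ∩ Δ̂ and every β ∈ Δ' such that α + β is a root, one has α + β ∈ Δ⁺ ∩ Δ̂. -/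

import Mathlib

open LieAlgebra LieModule

lemma aux_hH {L : Type} [LieRing L] [LieAlgebra ℂ L] [FiniteDimensional ℂ L]
    (H : LieSubalgebra ℂ L)
    (t : Module.Dual ℂ H → H)
    (ht : ∀ β : Module.Dual ℂ H, ∀ h : H, killingForm ℂ L (t β : L) (h : L) = β h) :
    ∀ x : H, (∀ h : H, killingForm ℂ L (x : L) (h : L) = 0) → x = 0 := by
  set B := LieModule.traceForm ℂ H L with hBdef
  have hB : ∀ x y : H, B x y = killingForm ℂ L (x : L) (y : L) := fun x y => rfl
  have hsurj : Function.Surjective ⇑B := by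
    intro β
    refine ⟨t β, ?_⟩
    ext h
    rw [hB]
    exact ht β h
  have hfr : Module.finrank ℂ H = Module.finrank ℂ (Module.Dual ℂ H) :=
    (Subspace.dual_finrank_eq).symm
  have hinj : Function.Injective ⇑B :=
    (LinearMap.injective_iff_surjective_of_finrank_eq_finrank hfr).mpr hsurj
  intro x hx
  have h0 : B x = 0 := by
    ext h
    rw [hB]
    exact hx h
  exact hinj (a₁ := x) (a₂ := 0) (by rw [h0, map_zero])

lemma aux_isKilling {L : Type} [LieRing L] [LieAlgebra ℂ L] [FiniteDimensional ℂ L]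
    [LieAlgebra.IsSemisimple ℂ L]
    (H : LieSubalgebra ℂ L) [H.IsCartanSubalgebra]
    (hH : ∀ x : H, (∀ h : H, killingForm ℂ L (x : L) (h : L) = 0) → x = 0) :
    LieAlgebra.IsKilling ℂ L := by
  constructor
  set I := LieIdeal.killingCompl ℂ L ⊤ with hIdef
  have hIzero : ∀ x ∈ I, ∀ y : L, killingForm ℂ L x y = 0 := by
    intro x hx y
    have := (LieIdeal.mem_killingCompl ℂ L ⊤).mp hx y (LieSubmodule.mem_top y)
    rwa [LieModule.traceForm_comm] at this
  set J := Iᶜ with hJdef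
  have hbot : ∀ z : L, z ∈ I → z ∈ J → z = 0 := by
    intro z h1 h2
    have h3 : z ∈ I ⊓ J := ⟨h1, h2⟩
    rw [inf_compl_eq_bot] at h3
    simpa using h3
  have hcomm : ∀ x ∈ I, ∀ y ∈ J, ⁅x, y⁆ = (0 : L) := by
    intro x hx y hy
    refine hbot _ ?_ (J.lie_mem hy)
    have : ⁅y, x⁆ ∈ I := I.lie_mem hx
    rw [← lie_skew]
    exact I.neg_mem this
  have hIter : ∀ (N : LieIdeal ℂ L) (x : H) (k : ℕ) (m : L), m ∈ N →
      ((LieModule.toEnd ℂ H L x) ^ k) m ∈ N := by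
    intro N x k
    induction k with
    | zero => intro m hm; simpa using hm
    | succ k ih =>
      intro m hm
      rw [pow_succ, Module.End.mul_apply]
      have heq : (LieModule.toEnd ℂ H L x) m = ⁅(x : L), m⁆ := by
        rw [LieModule.toEnd_apply_apply, LieSubalgebra.coe_bracket_of_module]
      rw [heq]
      exact ih _ (N.lie_mem hm)
  have hHJ : ∀ h : H, (h : L) ∈ J := by
    intro h
    have hmem : (h : L) ∈ I ⊔ J := by rw [sup_compl_eq_top]; exact LieSubmodule.mem_top _
    obtain ⟨a, ha, b, hb, hab⟩ := (LieSubmodule.mem_sup I J _).mp hmem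
    have haH : a ∈ LieAlgebra.rootSpace H 0 := by
      rw [LieModule.mem_genWeightSpace]
      intro x
      have hh : (h : L) ∈ LieAlgebra.rootSpace H 0 := by
        rw [LieAlgebra.rootSpace_zero_eq]
        exact (LieSubalgebra.mem_toLieSubmodule _).mpr h.2
      rw [LieModule.mem_genWeightSpace] at hh
      obtain ⟨k, hk⟩ := hh x
      refine ⟨k, ?_⟩
      simp only [Pi.zero_apply, zero_smul, sub_zero] at hk ⊢
      have hsum : ((LieModule.toEnd ℂ H L x) ^ k) a + ((LieModule.toEnd ℂ H L x) ^ k) b = 0 := by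
        rw [← map_add, hab, hk]
      have haI := hIter I x k a ha
      have hbJ := hIter J x k b hb
      have : ((LieModule.toEnd ℂ H L x) ^ k) a ∈ J := by
        rw [eq_neg_of_add_eq_zero_left hsum]
        exact J.neg_mem hbJ
      exact hbot _ haI this
    have haH' : a ∈ H := by
      rw [LieAlgebra.rootSpace_zero_eq] at haH
      exact (LieSubalgebra.mem_toLieSubmodule _).mp haH
    have ha0 : a = 0 := by
      have := hH ⟨a, haH'⟩ (fun h' => hIzero a ha h')
      simpa using congrArg (Subtype.val) this
    rw [← hab, ha0, zero_add]
    exact hb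
  rw [LieSubmodule.eq_bot_iff]
  intro y hy
  have hy0 : ∀ x : H, ⁅(x : L), y⁆ = 0 := by
    intro x
    have := hcomm y hy (x : L) (hHJ x)
    rw [← lie_skew, this, neg_zero]
  have hyH : y ∈ H := by
    have : y ∈ LieAlgebra.rootSpace H 0 := by
      rw [LieModule.mem_genWeightSpace]
      intro x
      refine ⟨1, ?_⟩
      simp only [Pi.zero_apply, zero_smul, sub_zero, pow_one]
      rw [LieModule.toEnd_apply_apply, LieSubalgebra.coe_bracket_of_module]
      exact hy0 x
    rw [LieAlgebra.rootSpace_zero_eq] at this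
    exact (LieSubalgebra.mem_toLieSubmodule _).mp this
  have := hH ⟨y, hyH⟩ (fun h' => hIzero y hy h')
  simpa using congrArg (Subtype.val) this

lemma aux_neg_root {L : Type} [LieRing L] [LieAlgebra ℂ L] [FiniteDimensional ℂ L]
    (H : LieSubalgebra ℂ L) [H.IsCartanSubalgebra]
    [LieAlgebra.IsKilling ℂ L]
    (a : Module.Dual ℂ H)
    (h : a ≠ 0 ∧ ∃ X : L, X ≠ 0 ∧ ∀ h : H, ⁅(h : L), X⁆ = a h • X) :
    -a ≠ 0 ∧ ∃ Y : L, Y ≠ 0 ∧ ∀ h : H, ⁅(h : L), Y⁆ = (-a) h • Y := by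
  obtain ⟨ha0, X, hX0, hX⟩ := h
  have hmem : X ∈ LieAlgebra.rootSpace H ⇑a := by
    rw [LieModule.mem_genWeightSpace]
    intro x
    refine ⟨1, ?_⟩
    simp only [pow_one, LinearMap.sub_apply, LinearMap.smul_apply, Module.End.one_apply]
    rw [LieModule.toEnd_apply_apply, LieSubalgebra.coe_bracket_of_module, hX x, sub_self]
  have hne : LieAlgebra.rootSpace H ⇑a ≠ ⊥ := by
    intro hb
    rw [hb, LieSubmodule.mem_bot] at hmem
    exact hX0 hmem
  set W : LieModule.Weight ℂ H L := ⟨⇑a, hne⟩ with hWdef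
  obtain ⟨Y, hYmem, hY0⟩ := (-W).exists_ne_zero
  refine ⟨neg_ne_zero.mpr ha0, Y, hY0, fun h => ?_⟩
  have hsm := LieAlgebra.IsKilling.lie_eq_smul_of_mem_rootSpace (K := ℂ) (α := ⇑(-W)) hYmem h
  rw [LieSubalgebra.coe_bracket_of_module] at hsm
  rw [hsm]
  congr 1

lemma aux_sum_nonneg : ∀ (l : List ℝ), (∀ x ∈ l, 0 ≤ x) → 0 ≤ l.sum := by
  intro l
  induction l with
  | nil => intro _; simp
  | cons a l ih =>
    intro h
    rw [List.sum_cons]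
    have := ih (fun x hx => h x (List.mem_cons_of_mem a hx))
    have := h a List.mem_cons_self
    linarith

lemma aux_sum_zero : ∀ (l : List ℝ), (∀ x ∈ l, 0 ≤ x) → l.sum = 0 → ∀ x ∈ l, x = 0 := by
  intro l
  induction l with
  | nil => intro _ _ x hx; simp at hx
  | cons a l ih =>
    intro h hsum x hx
    rw [List.sum_cons] at hsum
    have h1 : 0 ≤ a := h a List.mem_cons_self
    have h2 : 0 ≤ l.sum := aux_sum_nonneg l (fun y hy => h y (List.mem_cons_of_mem a hy))
    have ha : a = 0 := by linarith
    have hl : l.sum = 0 := by linarith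
    rcases List.mem_cons.mp hx with rfl | hx
    · exact ha
    · exact ih (fun y hy => h y (List.mem_cons_of_mem a hy)) hl x hx

lemma aux_re_sum : ∀ (l : List ℂ), l.sum.re = (l.map Complex.re).sum := by
  intro l
  induction l with
  | nil => simp
  | cons a l ih => simp [ih]

lemma aux_im_sum : ∀ (l : List ℂ), l.sum.im = (l.map Complex.im).sum := by
  intro l
  induction l with
  | nil => simp
  | cons a l ih => simp [ih]

/-- Let `𝔤` be a finite-dimensional complex semisimple Lie algebra,
`𝔥` a Cartan subalgebra, `Δ ⊆ 𝔥*` the set of roots, `λ ∈ 𝔥*`,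
`Δ' = {α ∈ Δ : (α,λ) = 0}` and `Δ̂ = Δ ∖ Δ'`.  Let `(Δ')⁺` be a positive system for
`Δ'` and set `Δ⁺ := (Δ')⁺ ∪ {α ∈ Δ̂ : Re (α,λ) > 0} ∪ {α ∈ Δ̂ : (α,λ) ∈ i·ℝ_{>0}}`.
Then `Δ⁺` is a positive system for `Δ`, and it is invariant: for every
`α ∈ Δ⁺ ∩ Δ̂` and every `β ∈ Δ'` such that `α + β` is a root, `α + β ∈ Δ⁺ ∩ Δ̂`. -/
theorem stmt1
    {L : Type} [LieRing L] [LieAlgebra ℂ L] [FiniteDimensional ℂ L]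
    [LieAlgebra.IsSemisimple ℂ L]
    (H : LieSubalgebra ℂ L) [H.IsCartanSubalgebra]
    -- `Δ` is the set of roots of `𝔤` with respect to `𝔥`
    (Δ : Set (Module.Dual ℂ H))
    (hΔ : Δ = {α | α ≠ 0 ∧ ∃ X : L, X ≠ 0 ∧ ∀ h : H, ⁅(h : L), X⁆ = α h • X})
    -- `t β ∈ 𝔥` represents `β` via the Killing form, and `pair` is the induced pairing
    (t : Module.Dual ℂ H → H)
    (ht : ∀ β : Module.Dual ℂ H, ∀ h : H, killingForm ℂ L (t β : L) (h : L) = β h)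
    (pair : Module.Dual ℂ H → Module.Dual ℂ H → ℂ)
    (hpair : ∀ β γ, pair β γ = killingForm ℂ L (t β : L) (t γ : L))
    (lam : Module.Dual ℂ H)
    -- `Δ'` and `Δ̂`
    (Δ' Δhat : Set (Module.Dual ℂ H))
    (hΔ' : Δ' = {α ∈ Δ | pair α lam = 0}) (hΔhat : Δhat = Δ \ Δ')
    -- `(Δ')⁺` is a positive system for `Δ'`
    (Δ'p : Set (Module.Dual ℂ H))
    (h'union : Δ'p ∪ -Δ'p = Δ') (h'disj : Δ'p ∩ -Δ'p = ∅)
    (h'sum : ∀ l : List (Module.Dual ℂ H), l ≠ [] → (∀ x ∈ l, x ∈ Δ'p) →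
      l.sum ∈ Δ' → l.sum ∈ Δ'p)
    -- the definition of `Δ⁺`
    (Δp : Set (Module.Dual ℂ H))
    (hΔp : Δp = Δ'p ∪ {α ∈ Δhat | 0 < (pair α lam).re}
        ∪ {α ∈ Δhat | ∃ r : ℝ, 0 < r ∧ pair α lam = (r : ℂ) * Complex.I}) :
    -- `Δ⁺` is a positive system for `Δ` ...
    (Δp ⊆ Δ ∧ Δp ∪ -Δp = Δ ∧ Δp ∩ -Δp = ∅ ∧
      (∀ l : List (Module.Dual ℂ H), l ≠ [] → (∀ x ∈ l, x ∈ Δp) →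
        l.sum ∈ Δ → l.sum ∈ Δp))
    -- ... and it is invariant
    ∧ (∀ α ∈ Δp ∩ Δhat, ∀ β ∈ Δ', α + β ∈ Δ → α + β ∈ Δp ∩ Δhat) := by
  haveI hKill : LieAlgebra.IsKilling ℂ L := aux_isKilling H (aux_hH H t ht)
  -- root symmetry
  have hsymm : ∀ a ∈ Δ, -a ∈ Δ := by
    intro a haa
    rw [hΔ] at haa ⊢
    exact aux_neg_root H a haa
  -- linearity of the pairing with lam
  have hpl : ∀ β, pair β lam = β (t lam) := fun β => by rw [hpair]; exact ht β (t lam)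
  have hadd : ∀ β γ, pair (β + γ) lam = pair β lam + pair γ lam := by
    intro β γ; simp [hpl]
  have hneg : ∀ β, pair (-β) lam = -pair β lam := by
    intro β; simp [hpl]
  have hlsum : ∀ l : List (Module.Dual ℂ H),
      pair l.sum lam = (l.map (fun x => pair x lam)).sum := by
    intro l
    induction l with
    | nil => simp [hpl]
    | cons a l ih => rw [List.sum_cons, hadd, ih, List.map_cons, List.sum_cons]
  -- basic set facts
  have hΔ'Δ : Δ' ⊆ Δ := by rw [hΔ']; exact Set.sep_subset _ _
  have hΔ'pair : ∀ x ∈ Δ', pair x lam = 0 := by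
    rw [hΔ']; rintro x ⟨-, h⟩; exact h
  have hΔ'pSub : Δ'p ⊆ Δ' := by rw [← h'union]; exact Set.subset_union_left
  have hΔ'mem : ∀ x ∈ Δ, pair x lam = 0 → x ∈ Δ' := by
    intro x hx h0; rw [hΔ']; exact ⟨hx, h0⟩
  have hhatmem : ∀ x ∈ Δ, pair x lam ≠ 0 → x ∈ Δhat := by
    intro x hx h0
    rw [hΔhat]
    refine ⟨hx, fun hmem => h0 (hΔ'pair x hmem)⟩
  have hhatpair : ∀ x ∈ Δhat, pair x lam ≠ 0 := by
    intro x hx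
    rw [hΔhat] at hx
    exact fun h0 => hx.2 (hΔ'mem x hx.1 h0)
  -- the three facts about members of Δp
  have hF : ∀ x ∈ Δp, 0 ≤ (pair x lam).re ∧ ((pair x lam).re = 0 → 0 ≤ (pair x lam).im)
      ∧ (pair x lam = 0 → x ∈ Δ'p) := by
    intro x hx
    rw [hΔp] at hx
    rcases hx with (hx | hx) | hx
    · have h0 : pair x lam = 0 := hΔ'pair x (hΔ'pSub hx)
      rw [h0]
      exact ⟨le_refl 0, fun _ => le_refl 0, fun _ => hx⟩
    · obtain ⟨hxh, hre⟩ := hx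
      exact ⟨le_of_lt hre, fun h => absurd h (ne_of_gt hre),
        fun h0 => absurd (by rw [h0]; simp) (ne_of_gt hre)⟩
    · obtain ⟨hxh, r, hr, heq⟩ := hx
      rw [heq]
      refine ⟨by simp, fun _ => by simpa using le_of_lt hr, fun h0 => ?_⟩
      exfalso
      have : ((r : ℂ) * Complex.I).im = 0 := by rw [h0]; simp
      simp at this
      exact (ne_of_gt hr) this
  have hΔpΔ : Δp ⊆ Δ := by
    intro x hx
    rw [hΔp] at hx
    rcases hx with (hx | hx) | hx
    · exact hΔ'Δ (hΔ'pSub hx)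
    · rw [hΔhat] at hx; exact hx.1.1
    · rw [hΔhat] at hx; exact hx.1.1
  -- membership helpers for the hat parts of Δp
  have hmemRe : ∀ x ∈ Δ, 0 < (pair x lam).re → x ∈ Δp := by
    intro x hx hre
    rw [hΔp]
    exact Or.inl (Or.inr ⟨hhatmem x hx (fun h0 => by rw [h0] at hre; simp at hre), hre⟩)
  have hmemIm : ∀ x ∈ Δ, (pair x lam).re = 0 → 0 < (pair x lam).im → x ∈ Δp := by
    intro x hx hre him
    rw [hΔp]
    refine Or.inr ⟨hhatmem x hx (fun h0 => by rw [h0] at him; simp at him),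
      (pair x lam).im, him, ?_⟩
    apply Complex.ext <;> simp [hre]
  have hmem'p : Δ'p ⊆ Δp := by
    rw [hΔp]; intro x hx; exact Or.inl (Or.inl hx)
  refine ⟨⟨hΔpΔ, ?_, ?_, ?_⟩, ?_⟩
  · -- union
    apply Set.Subset.antisymm
    · rintro x (hx | hx)
      · exact hΔpΔ hx
      · rw [Set.mem_neg] at hx
        have := hsymm _ (hΔpΔ hx)
        simpa using this
    · intro x hx
      by_cases h0 : pair x lam = 0
      · have hx' : x ∈ Δ' := hΔ'mem x hx h0
        rw [← h'union] at hx'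
        rcases hx' with hx' | hx'
        · exact Or.inl (hmem'p hx')
        · exact Or.inr (by rw [Set.mem_neg]; exact hmem'p hx')
      · rcases lt_trichotomy 0 (pair x lam).re with hre | hre | hre
        · exact Or.inl (hmemRe x hx hre)
        · rcases lt_trichotomy 0 (pair x lam).im with him | him | him
          · exact Or.inl (hmemIm x hx hre.symm him)
          · exact absurd (Complex.ext hre.symm him.symm) h0
          · refine Or.inr ?_
            rw [Set.mem_neg]
            refine hmemIm (-x) (hsymm x hx) ?_ ?_ <;> rw [hneg] <;> simp [← hre]
            · linarith
        · refine Or.inr ?_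
          rw [Set.mem_neg]
          refine hmemRe (-x) (hsymm x hx) ?_
          rw [hneg]
          simp
          linarith
  · -- disjoint
    rw [Set.eq_empty_iff_forall_notMem]
    rintro x ⟨h1, h2⟩
    rw [Set.mem_neg] at h2
    obtain ⟨ha1, hb1, hc1⟩ := hF x h1
    obtain ⟨ha2, hb2, hc2⟩ := hF (-x) h2
    rw [hneg] at ha2 hb2 hc2
    simp only [Complex.neg_re, Complex.neg_im, neg_eq_zero] at ha2 hb2 hc2
    have hre : (pair x lam).re = 0 := le_antisymm (by linarith) ha1
    have him : (pair x lam).im = 0 := by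
      have := hb1 hre
      have := hb2 hre
      linarith
    have h0 : pair x lam = 0 := Complex.ext hre him
    have hx1 : x ∈ Δ'p := hc1 h0
    have hx2 : -x ∈ Δ'p := hc2 h0
    have : x ∈ Δ'p ∩ -Δ'p := ⟨hx1, by rwa [Set.mem_neg]⟩
    rw [h'disj] at this
    exact this
  · -- sums
    intro l hl hall hs
    have hz := hlsum l
    set z := pair l.sum lam with hzdef
    have hreS : z.re = (l.map (fun x => (pair x lam).re)).sum := by
      rw [hz, aux_re_sum, List.map_map]; rfl
    have himS : z.im = (l.map (fun x => (pair x lam).im)).sum := by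
      rw [hz, aux_im_sum, List.map_map]; rfl
    have hrenn : ∀ y ∈ l.map (fun x => (pair x lam).re), 0 ≤ y := by
      intro y hy
      obtain ⟨x, hx, rfl⟩ := List.mem_map.mp hy
      exact (hF x (hall x hx)).1
    have hrege : 0 ≤ z.re := by rw [hreS]; exact aux_sum_nonneg _ hrenn
    rcases lt_or_eq_of_le hrege with hre | hre
    · exact hmemRe _ hs hre
    · -- all real parts vanish
      have hre0 : ∀ x ∈ l, (pair x lam).re = 0 := by
        intro x hx
        exact aux_sum_zero _ hrenn (by rw [← hreS, ← hre]) _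
          (List.mem_map_of_mem (f := fun x => (pair x lam).re) hx)
      have himnn : ∀ y ∈ l.map (fun x => (pair x lam).im), 0 ≤ y := by
        intro y hy
        obtain ⟨x, hx, rfl⟩ := List.mem_map.mp hy
        exact (hF x (hall x hx)).2.1 (hre0 x hx)
      have himge : 0 ≤ z.im := by rw [himS]; exact aux_sum_nonneg _ himnn
      rcases lt_or_eq_of_le himge with him | him
      · exact hmemIm _ hs hre.symm him
      · have him0 : ∀ x ∈ l, (pair x lam).im = 0 := by
          intro x hx
          exact aux_sum_zero _ himnn (by rw [← himS, ← him]) _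
            (List.mem_map_of_mem (f := fun x => (pair x lam).im) hx)
        have hall' : ∀ x ∈ l, x ∈ Δ'p := by
          intro x hx
          exact (hF x (hall x hx)).2.2 (Complex.ext (hre0 x hx) (him0 x hx))
        have : l.sum ∈ Δ' := hΔ'mem _ hs (Complex.ext hre.symm him.symm)
        exact hmem'p (h'sum l hl hall' this)
  · -- invariance
    rintro α ⟨hα1, hα2⟩ β hβ hαβ
    have hβ0 : pair β lam = 0 := hΔ'pair β hβ
    have hab : pair (α + β) lam = pair α lam := by rw [hadd, hβ0, add_zero]
    have hαne : pair α lam ≠ 0 := hhatpair α hα2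
    have habhat : α + β ∈ Δhat := hhatmem _ hαβ (by rw [hab]; exact hαne)
    refine ⟨?_, habhat⟩
    rw [hΔp] at hα1 ⊢
    rcases hα1 with (hx | hx) | hx
    · exact absurd (hΔ'pair α (hΔ'pSub hx)) hαne
    · exact Or.inl (Or.inr ⟨habhat, by rw [hab]; exact hx.2⟩)
    · obtain ⟨-, r, hr, heq⟩ := hx
      exact Or.inr ⟨habhat, r, hr, by rw [hab]; exact heq⟩
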